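/- Let X be a linear order whose automorphism group Aut(X) acts ultratransitively on X. Then for every finite subset σ of X there exists a finite set F ⊆ Aut(X) such that every g ∈ Aut(X) can be written as g = u ∘ f ∘ v with f ∈ F and u, v order automorphisms of X fixing σ pointwise. Consequently, Aut(X) with the topology of pointwise convergence is Roelcke precompact. -/

import Mathlib

/-- Key lemma: if two finite tuples in `X` have the same comparison pattern, then (by
ultratransitivity) some order automorphism of `X` carries the first tuple to the second. -/
lemma keyA {X : Type*} [LinearOrder X]
    (hu : ∀ (n : ℕ) (x y : Fin n → X), StrictMono x → StrictMono y →
      ∃ g : X ≃o X, ∀ i, g (x i) = y i)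
    {ι : Type*} [Fintype ι] [DecidableEq ι] (c c' : ι → X)
    (h : ∀ p q, c p ≤ c q ↔ c' p ≤ c' q) :
    ∃ g : X ≃o X, ∀ p, g (c p) = c' p := by
  classical
  set T : Finset X := Finset.image c Finset.univ with hT
  let a : Fin T.card ↪o X := T.orderEmbOfFin rfl
  have hmem : ∀ i : Fin T.card, ∃ p, c p = a i := by
    intro i
    have : a i ∈ T := by
      have := Finset.range_orderEmbOfFin T (rfl : T.card = T.card)
      have : a i ∈ (T : Set X) := this ▸ Set.mem_range_self i
      exact_mod_cast this
    simpa [hT, Finset.mem_image, eq_comm] using this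
  choose P hP using hmem
  have hlt : ∀ p q, c p < c q ↔ c' p < c' q := by
    intro p q
    rw [lt_iff_not_ge, lt_iff_not_ge, h q p]
  have heq : ∀ p q, c p = c q → c' p = c' q := by
    intro p q hpq
    exact le_antisymm ((h p q).1 hpq.le) ((h q p).1 hpq.ge)
  have hb : StrictMono (fun i => c' (P i)) := by
    intro i j hij
    have : c (P i) < c (P j) := by rw [hP i, hP j]; exact a.strictMono hij
    exact (hlt _ _).1 this
  obtain ⟨g, hg⟩ := hu T.card (fun i => a i) (fun i => c' (P i)) a.strictMono hb
  refine ⟨g, fun p => ?_⟩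
  have hpT : c p ∈ T := Finset.mem_image_of_mem c (Finset.mem_univ p)
  have : ∃ i, a i = c p := by
    have := Finset.range_orderEmbOfFin T (rfl : T.card = T.card)
    have h2 : c p ∈ Set.range a := by rw [this]; exact_mod_cast hpT
    exact h2
  obtain ⟨i, hi⟩ := this
  have h3 : g (c p) = c' (P i) := by rw [← hi]; exact hg i
  rw [h3]
  exact heq _ _ (by rw [hP i, hi])

/-- Let `X` be a linear order whose automorphism group `Aut(X) = X ≃o X` acts
ultratransitively on the chain `X`.  Then for every finite `σ ⊆ X` there is a finite set
`F` of order automorphisms such that every `g ∈ Aut(X)` can be written as `g = u ∘ f ∘ v`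
with `f ∈ F` and `u, v` order automorphisms fixing `σ` pointwise.  Consequently `Aut(X)`
with the topology of pointwise convergence is Roelcke precompact. -/
theorem stmt15 {X : Type*} [LinearOrder X]
    (hu : ∀ (n : ℕ) (x y : Fin n → X), StrictMono x → StrictMono y →
      ∃ g : X ≃o X, ∀ i, g (x i) = y i)
    (σ : Finset X) :
    ∃ F : Finset (X ≃o X), ∀ g : X ≃o X, ∃ f ∈ F, ∃ u v : X ≃o X,
      (∀ x ∈ σ, u x = x) ∧ (∀ x ∈ σ, v x = x) ∧ g = u * f * v := by
  classical
  set n := σ.card with hn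
  let s : Fin n → X := fun i => σ.orderEmbOfFin hn.symm i
  have hs : ∀ x ∈ σ, ∃ i, s i = x := by
    intro x hx
    have := Finset.range_orderEmbOfFin σ hn.symm
    have h2 : x ∈ Set.range (σ.orderEmbOfFin hn.symm) := by rw [this]; exact_mod_cast hx
    exact h2
  -- The combined tuple of `σ` and `g '' σ`, indexed by `Fin n ⊕ Fin n`.
  let c : (X ≃o X) → (Fin n ⊕ Fin n) → X := fun g => Sum.elim s (fun i => g (s i))
  -- The comparison pattern of `g`, an element of a finite type.
  let Pat : (X ≃o X) → ((Fin n ⊕ Fin n) → (Fin n ⊕ Fin n) → Bool) :=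
    fun g p q => decide (c g p ≤ c g q)
  let rep : ((Fin n ⊕ Fin n) → (Fin n ⊕ Fin n) → Bool) → (X ≃o X) :=
    fun b => if h : ∃ g : X ≃o X, Pat g = b then h.choose else OrderIso.refl X
  refine ⟨Finset.image rep Finset.univ, fun g => ?_⟩
  have hex : ∃ g' : X ≃o X, Pat g' = Pat g := ⟨g, rfl⟩
  set f := rep (Pat g) with hf
  refine ⟨f, Finset.mem_image_of_mem rep (Finset.mem_univ _), ?_⟩
  have hfPat : Pat f = Pat g := by
    rw [hf]
    simp only [rep, dif_pos hex]
    exact hex.choose_spec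
  have hle : ∀ p q, c f p ≤ c f q ↔ c g p ≤ c g q := by
    intro p q
    have := congrFun (congrFun hfPat p) q
    simpa [Pat, decide_eq_decide] using this
  obtain ⟨h, hh⟩ := keyA hu (c f) (c g) hle
  -- `h` fixes `σ` pointwise and `h ∘ f = g` on `σ`.
  have hfix : ∀ x ∈ σ, h x = x := by
    intro x hx
    obtain ⟨i, hi⟩ := hs x hx
    have := hh (Sum.inl i)
    simpa [c, hi] using this
  have hcarry : ∀ i, h (f (s i)) = g (s i) := by
    intro i
    have := hh (Sum.inr i)
    simpa [c] using this
  refine ⟨h, f⁻¹ * h⁻¹ * g, hfix, ?_, ?_⟩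
  · intro x hx
    obtain ⟨i, hi⟩ := hs x hx
    have h1 : h⁻¹ (g x) = f x := by
      rw [← hi, ← hcarry i]
      exact h.symm_apply_apply _
    show f⁻¹ (h⁻¹ (g x)) = x
    rw [h1]
    exact f.symm_apply_apply x
  · group
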